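/- Let G : ℂ → ℂ be entire, and suppose there exist constants ρ ≥ 0 and r₀ > 0 such that (1/(2π)) ∫₀^{2π} |G(r e^{iθ})|² dθ ≤ r^ρ for all r ≥ r₀. Then G is a polynomial of degree at most ρ/2. -/

import Mathlib

open Complex Real MeasureTheory Filter

private lemma l1_bound_aux (G : ℂ → ℂ) (hG : Differentiable ℂ G) (ρ : ℝ)
    (r : ℝ) (hr : 1 ≤ r)
    (hb : (1 / (2 * π)) * ∫ θ in (0:ℝ)..(2 * π),
          ‖G (r * Complex.exp (θ * Complex.I))‖ ^ 2 ≤ r ^ ρ) :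
    (2 * π)⁻¹ * ∫ θ in (0:ℝ)..(2 * π), ‖G (circleMap 0 r θ)‖ ≤ r ^ (ρ / 2) := by
  have hrpos : (0:ℝ) < r := lt_of_lt_of_le one_pos hr
  set t : ℝ := r ^ (ρ / 2) with ht
  have htpos : 0 < t := Real.rpow_pos_of_pos hrpos _
  have hcont : Continuous fun θ : ℝ => ‖G (circleMap 0 r θ)‖ :=
    (hG.continuous.comp (continuous_circleMap 0 r)).norm
  have hint1 : IntervalIntegrable (fun θ : ℝ => ‖G (circleMap 0 r θ)‖) volume 0 (2*π) :=
    hcont.intervalIntegrable _ _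
  have hint2 : IntervalIntegrable (fun θ : ℝ => ‖G (circleMap 0 r θ)‖^2 / (2*t) + t/2)
      volume 0 (2*π) := (((hcont.pow 2).div_const _).add continuous_const).intervalIntegrable _ _
  have hmono : ∫ θ in (0:ℝ)..(2*π), ‖G (circleMap 0 r θ)‖ ≤
      ∫ θ in (0:ℝ)..(2*π), (‖G (circleMap 0 r θ)‖^2 / (2*t) + t/2) := by
    apply intervalIntegral.integral_mono_on Real.two_pi_pos.le hint1 hint2
    intro θ _
    have h := sq_nonneg (‖G (circleMap 0 r θ)‖ - t)
    rw [div_add_div _ _ (by positivity) (by positivity), le_div_iff₀ (by positivity)]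
    nlinarith
  have hsplit : ∫ θ in (0:ℝ)..(2*π), (‖G (circleMap 0 r θ)‖^2 / (2*t) + t/2) =
      (∫ θ in (0:ℝ)..(2*π), ‖G (circleMap 0 r θ)‖^2) / (2*t) + (2*π) * (t/2) := by
    rw [intervalIntegral.integral_add (f := fun θ : ℝ => ‖G (circleMap 0 r θ)‖^2 / (2*t)) (((hcont.pow 2).div_const _).intervalIntegrable _ _)
      (intervalIntegrable_const), intervalIntegral.integral_div,
      intervalIntegral.integral_const, smul_eq_mul, sub_zero]
  have heq : ∀ θ : ℝ, ‖G (circleMap 0 r θ)‖^2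
      = ‖G (r * Complex.exp (θ * Complex.I))‖ ^ 2 := by
    intro θ; simp [circleMap]
  have hb' : (2 * π)⁻¹ * ∫ θ in (0:ℝ)..(2*π), ‖G (circleMap 0 r θ)‖^2 ≤ r ^ ρ := by
    rw [← one_div]
    simpa only [heq] using hb
  have h2pi : (0:ℝ) < 2 * π := Real.two_pi_pos
  have key : (2 * π)⁻¹ * ∫ θ in (0:ℝ)..(2*π), ‖G (circleMap 0 r θ)‖ ≤
      r ^ ρ / (2*t) + t/2 := by
    calc (2 * π)⁻¹ * ∫ θ in (0:ℝ)..(2*π), ‖G (circleMap 0 r θ)‖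
        ≤ (2 * π)⁻¹ * ((∫ θ in (0:ℝ)..(2*π), ‖G (circleMap 0 r θ)‖^2) / (2*t) + (2*π) * (t/2)) := by
          rw [← hsplit]; exact mul_le_mul_of_nonneg_left hmono (by positivity)
      _ = ((2 * π)⁻¹ * ∫ θ in (0:ℝ)..(2*π), ‖G (circleMap 0 r θ)‖^2) / (2*t) + t/2 := by
          field_simp
      _ ≤ r ^ ρ / (2*t) + t/2 := by gcongr
  have hts : t * t = r ^ ρ := by
    rw [ht, ← Real.rpow_add hrpos]; norm_num
  calc (2 * π)⁻¹ * ∫ θ in (0:ℝ)..(2*π), ‖G (circleMap 0 r θ)‖ ≤ r ^ ρ / (2*t) + t/2 := key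
    _ = t := by rw [← hts]; field_simp; ring

private lemma coeff_zero_aux (G : ℂ → ℂ) (hG : Differentiable ℂ G) (ρ : ℝ) (r₀ : ℝ)
    (hl1 : ∀ r : ℝ, max r₀ 1 ≤ r →
      (2 * π)⁻¹ * ∫ θ in (0:ℝ)..(2 * π), ‖G (circleMap 0 r θ)‖ ≤ r ^ (ρ / 2))
    (n : ℕ) (hn : ρ / 2 < n) :
    cauchyPowerSeries G 0 1 n = 0 := by
  have h1 : HasFPowerSeriesOnBall G (cauchyPowerSeries G 0 ((1:NNReal):ℝ)) 0 ⊤ :=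
    hG.hasFPowerSeriesOnBall 0 one_pos
  rw [show ((1:NNReal):ℝ) = (1:ℝ) from rfl] at h1
  set p := cauchyPowerSeries G 0 1 with hp
  have hbnd : ∀ r : ℝ, max r₀ 1 ≤ r → ‖p n‖ ≤ r ^ (ρ / 2 - n) := by
    intro r hr
    have hr1 : (1:ℝ) ≤ r := le_trans (le_max_right _ _) hr
    have hrpos : (0:ℝ) < r := lt_of_lt_of_le one_pos hr1
    have hR : (0 : NNReal) < ⟨r, hrpos.le⟩ := hrpos
    have h2 : HasFPowerSeriesOnBall G (cauchyPowerSeries G 0 ((⟨r, hrpos.le⟩ : NNReal):ℝ)) 0 ⊤ :=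
      hG.hasFPowerSeriesOnBall 0 hR
    rw [show (((⟨r, hrpos.le⟩ : NNReal)):ℝ) = r from rfl] at h2
    have hpe : p = cauchyPowerSeries G 0 r :=
      h1.hasFPowerSeriesAt.eq_formalMultilinearSeries h2.hasFPowerSeriesAt
    have hle := norm_cauchyPowerSeries_le G 0 r n
    rw [← hpe] at hle
    calc ‖p n‖ ≤ ((2 * π)⁻¹ * ∫ θ in (0:ℝ)..(2*π), ‖G (circleMap 0 r θ)‖) * |r|⁻¹ ^ n := hle
      _ ≤ r ^ (ρ/2) * |r|⁻¹ ^ n := by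
          gcongr
          · exact hl1 r hr
      _ = r ^ (ρ/2 - n) := by
          rw [abs_of_pos hrpos, Real.rpow_sub hrpos, Real.rpow_natCast, inv_pow]
          exact (div_eq_mul_inv _ _).symm
  have htend : Tendsto (fun r : ℝ => r ^ (ρ/2 - n)) atTop (nhds 0) := by
    have h := tendsto_rpow_neg_atTop (y := (n:ℝ) - ρ/2) (by linarith)
    simpa [neg_sub] using h
  have hle0 : ‖p n‖ ≤ 0 := ge_of_tendsto htend (eventually_atTop.mpr ⟨max r₀ 1, hbnd⟩)
  exact norm_le_zero_iff.mp hle0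

theorem L2_growth_implies_polynomial (G : ℂ → ℂ) (hG : Differentiable ℂ G)
    (ρ : ℝ) (hρ : 0 ≤ ρ) (r₀ : ℝ) (hr₀ : 0 < r₀)
    (hbound : ∀ r : ℝ, r₀ ≤ r →
      (1 / (2 * π)) * ∫ θ in (0:ℝ)..(2 * π),
          ‖G (r * Complex.exp (θ * Complex.I))‖ ^ 2 ≤ r ^ ρ) :
    ∃ P : Polynomial ℂ, (∀ z : ℂ, G z = P.eval z) ∧ (P.natDegree : ℝ) ≤ ρ / 2 := by
  have hl1 : ∀ r : ℝ, max r₀ 1 ≤ r →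
      (2 * π)⁻¹ * ∫ θ in (0:ℝ)..(2 * π), ‖G (circleMap 0 r θ)‖ ≤ r ^ (ρ / 2) := fun r hr =>
    l1_bound_aux G hG ρ r (le_trans (le_max_right _ _) hr)
      (hbound r (le_trans (le_max_left _ _) hr))
  set p := cauchyPowerSeries G 0 1 with hp
  have h1 : HasFPowerSeriesOnBall G (cauchyPowerSeries G 0 ((1:NNReal):ℝ)) 0 ⊤ :=
    hG.hasFPowerSeriesOnBall 0 one_pos
  rw [show ((1:NNReal):ℝ) = (1:ℝ) from rfl] at h1
  set N : ℕ := ⌊ρ / 2⌋₊ with hN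
  refine ⟨∑ n ∈ Finset.range (N + 1), Polynomial.C (p.coeff n) * Polynomial.X ^ n, ?_, ?_⟩
  · intro z
    have hmem : z ∈ Metric.eball (0:ℂ) ⊤ := by simp
    have hsum : HasSum (fun n => p n fun _ => z) (G (0 + z)) := h1.hasSum hmem
    rw [zero_add] at hsum
    have hvanish : ∀ n ∉ Finset.range (N + 1), (p n fun _ => z) = (0:ℂ) := by
      intro n hn
      have hn' : N < n := by simpa using hn
      have : ρ / 2 < n := (Nat.floor_lt (by positivity)).mp hn'
      have hz0 : p n = 0 := coeff_zero_aux G hG ρ r₀ hl1 n this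
      rw [hz0]
      simp
    have hsum2 : HasSum (fun n => p n fun _ => z)
        (∑ n ∈ Finset.range (N + 1), (p n fun _ => z)) :=
      hasSum_sum_of_ne_finset_zero hvanish
    rw [hsum.unique hsum2]
    rw [Polynomial.eval_finset_sum]
    refine Finset.sum_congr rfl fun n _ => ?_
    rw [p.apply_eq_pow_smul_coeff, Polynomial.eval_mul, Polynomial.eval_C,
      Polynomial.eval_pow, Polynomial.eval_X, smul_eq_mul, mul_comm]
  · refine le_trans ?_ (Nat.floor_le (by positivity : (0:ℝ) ≤ ρ / 2))
    have : (∑ n ∈ Finset.range (N + 1), Polynomial.C (p.coeff n) * Polynomial.X ^ n).natDegree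
        ≤ N := by
      apply Polynomial.natDegree_sum_le_of_forall_le
      intro n hn
      exact le_trans (Polynomial.natDegree_C_mul_X_pow_le _ _) (Nat.lt_succ_iff.mp (Finset.mem_range.mp hn))
    exact_mod_cast this
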